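/- For all real numbers t < T, σ > 0 and r > 0, one has r ∫_t^T e^{−r(u−t)} N(σ√(u−t)) du = 1/2 − e^{−r(T−t)} N(σ√(T−t)) + (σ/√(2r+σ²)) · (N(√((2r+σ²)(T−t))) − 1/2). -/

import Mathlib

open MeasureTheory Real Set Filter

/-- Standard normal cdf `N(x)`. -/
noncomputable def stdCdf (x : ℝ) : ℝ := ∫ y in Set.Iic x, Real.exp (-y ^ 2 / 2) / Real.sqrt (2 * Real.pi)

noncomputable def stdPdf (y : ℝ) : ℝ := Real.exp (-y ^ 2 / 2) / Real.sqrt (2 * Real.pi)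

lemma stdPdf_integrable : Integrable stdPdf := by
  have h : Integrable fun y : ℝ => Real.exp (-(1/2 : ℝ) * y ^ 2) :=
    integrable_exp_neg_mul_sq (by norm_num)
  have : stdPdf = fun y => Real.exp (-(1/2 : ℝ) * y ^ 2) / Real.sqrt (2 * Real.pi) := by
    funext y; unfold stdPdf; ring_nf
  rw [this]
  exact h.div_const _

lemma stdPdf_continuous : Continuous stdPdf := by
  unfold stdPdf
  fun_prop

lemma stdCdf_zero : stdCdf 0 = 1 / 2 := by
  unfold stdCdf
  have h1 : (∫ y in Set.Iic (0:ℝ), Real.exp (-y ^ 2 / 2)) =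
      ∫ y in Set.Ioi (0:ℝ), Real.exp (-y ^ 2 / 2) := by
    have h := integral_comp_neg_Iic (0:ℝ) (fun y => Real.exp (-y ^ 2 / 2))
    simpa [neg_zero] using h
  have h2 : (∫ y in Set.Ioi (0:ℝ), Real.exp (-(1/2 : ℝ) * y ^ 2)) = Real.sqrt (Real.pi / (1/2)) / 2 :=
    integral_gaussian_Ioi (1/2)
  have h3 : (∫ y in Set.Ioi (0:ℝ), Real.exp (-y ^ 2 / 2)) = Real.sqrt (2 * Real.pi) / 2 := by
    rw [show (fun y : ℝ => Real.exp (-y ^ 2 / 2)) = fun y : ℝ => Real.exp (-(1/2 : ℝ) * y ^ 2) by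
      funext y; ring_nf] at *
    rw [h2]; norm_num [div_div_eq_mul_div, mul_comm]
  rw [MeasureTheory.integral_div, h1, h3]
  rw [div_right_comm, div_self (by positivity : Real.sqrt (2 * Real.pi) ≠ 0)]

lemma stdCdf_sub (a b : ℝ) : stdCdf b - stdCdf a = ∫ y in a..b, stdPdf y := by
  exact intervalIntegral.integral_Iic_sub_Iic stdPdf_integrable.integrableOn
    stdPdf_integrable.integrableOn

lemma hasDerivAt_stdCdf (x : ℝ) : HasDerivAt stdCdf (stdPdf x) x := by
  have : stdCdf = fun b => stdCdf 0 + ∫ y in (0:ℝ)..b, stdPdf y := by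
    funext b; rw [← stdCdf_sub]; ring
  rw [this]
  refine HasDerivAt.const_add _ ?_
  exact intervalIntegral.integral_hasDerivAt_right
    (stdPdf_integrable.intervalIntegrable)
    (stdPdf_continuous.stronglyMeasurableAtFilter _ _)
    stdPdf_continuous.continuousAt

@[fun_prop] lemma continuous_stdCdf : Continuous stdCdf :=
  continuous_iff_continuousAt.2 fun x => (hasDerivAt_stdCdf x).continuousAt

theorem discounted_cdf_integral_identity' (t T σ r : ℝ) (htT : t < T) (hσ : 0 < σ) (hr : 0 < r) :
    r * ∫ u in t..T, Real.exp (-r * (u - t)) * stdCdf (σ * Real.sqrt (u - t))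
      = 1 / 2 - Real.exp (-r * (T - t)) * stdCdf (σ * Real.sqrt (T - t))
        + σ / Real.sqrt (2 * r + σ ^ 2) *
          (stdCdf (Real.sqrt ((2 * r + σ ^ 2) * (T - t))) - 1 / 2) := by
  set c : ℝ := 2 * r + σ ^ 2 with hc
  have hc0 : 0 < c := by positivity
  set f : ℝ → ℝ := fun x =>
    r * ∫ u in t..x, Real.exp (-r * (u - t)) * stdCdf (σ * Real.sqrt (u - t)) with hf
  set g : ℝ → ℝ := fun x => 1 / 2 - Real.exp (-r * (x - t)) * stdCdf (σ * Real.sqrt (x - t))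
        + σ / Real.sqrt c * (stdCdf (Real.sqrt (c * (x - t))) - 1 / 2) with hg
  have hcont : Continuous fun u => Real.exp (-r * (u - t)) * stdCdf (σ * Real.sqrt (u - t)) := by
    fun_prop
  have hdf : ∀ x, HasDerivAt f
      (r * (Real.exp (-r * (x - t)) * stdCdf (σ * Real.sqrt (x - t)))) x := by
    intro x
    exact (intervalIntegral.integral_hasDerivAt_right (hcont.intervalIntegrable _ _)
      (hcont.stronglyMeasurableAtFilter _ _) hcont.continuousAt).const_mul r
  have hdg : ∀ x, t < x → HasDerivAt g
      (r * (Real.exp (-r * (x - t)) * stdCdf (σ * Real.sqrt (x - t)))) x := by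
    intro x hx
    have hs : 0 < x - t := sub_pos.2 hx
    have h0s : Real.sqrt (x - t) ≠ 0 := (Real.sqrt_pos.2 hs).ne'
    have hsub : HasDerivAt (fun y : ℝ => y - t) 1 x := (hasDerivAt_id x).sub_const t
    have hsqrt : HasDerivAt (fun y : ℝ => Real.sqrt (y - t))
        (1 / (2 * Real.sqrt (x - t))) x := by
      have h := (Real.hasDerivAt_sqrt hs.ne').comp x hsub
      rw [mul_one] at h
      exact h
    have hA : HasDerivAt (fun y : ℝ => Real.exp (-r * (y - t)))
        (-r * Real.exp (-r * (x - t))) x := by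
      have h1 : HasDerivAt (fun y : ℝ => -r * (y - t)) (-r) x := by
        simpa using hsub.const_mul (-r)
      simpa [mul_comm] using h1.exp
    have hB : HasDerivAt (fun y : ℝ => stdCdf (σ * Real.sqrt (y - t)))
        (stdPdf (σ * Real.sqrt (x - t)) * (σ * (1 / (2 * Real.sqrt (x - t))))) x :=
      (hasDerivAt_stdCdf _).comp x (hsqrt.const_mul σ)
    have hin : HasDerivAt (fun y : ℝ => Real.sqrt (c * (y - t)))
        (1 / (2 * Real.sqrt (c * (x - t))) * c) x := by
      have h1 : HasDerivAt (fun y : ℝ => c * (y - t)) c x := by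
        simpa using hsub.const_mul c
      exact (Real.hasDerivAt_sqrt (by positivity)).comp x h1
    have hC : HasDerivAt (fun y : ℝ => stdCdf (Real.sqrt (c * (y - t))))
        (stdPdf (Real.sqrt (c * (x - t))) * (1 / (2 * Real.sqrt (c * (x - t))) * c)) x :=
      (hasDerivAt_stdCdf _).comp x hin
    have hD : HasDerivAt g
        (-(-r * Real.exp (-r * (x - t)) * stdCdf (σ * Real.sqrt (x - t)) +
            Real.exp (-r * (x - t)) *
              (stdPdf (σ * Real.sqrt (x - t)) * (σ * (1 / (2 * Real.sqrt (x - t)))))) +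
          σ / Real.sqrt c *
            (stdPdf (Real.sqrt (c * (x - t))) * (1 / (2 * Real.sqrt (c * (x - t))) * c))) x := by
      exact ((hA.mul hB).const_sub (1 / 2)).add ((hC.sub_const (1 / 2)).const_mul _)
    convert hD using 1
    have hP : Real.exp (-r * (x - t)) * stdPdf (σ * Real.sqrt (x - t)) =
        stdPdf (Real.sqrt (c * (x - t))) := by
      unfold stdPdf
      rw [mul_pow, Real.sq_sqrt hs.le, Real.sq_sqrt (by positivity : (0:ℝ) ≤ c * (x - t)),
        mul_div_assoc', ← Real.exp_add]
      congr 2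
      rw [hc]; ring
    have hsplit : Real.sqrt (c * (x - t)) = Real.sqrt c * Real.sqrt (x - t) :=
      Real.sqrt_mul hc0.le _
    have hcc : Real.sqrt c * Real.sqrt c = c := Real.mul_self_sqrt hc0.le
    have h0c : Real.sqrt c ≠ 0 := (Real.sqrt_pos.2 hc0).ne'
    rw [← hP, hsplit, ← hcc]
    field_simp
    have h1 : Real.sqrt c ^ 2 = c := Real.sq_sqrt hc0.le
    have h2 : Real.sqrt (Real.sqrt c ^ 2) ^ 2 = c := by
      rw [Real.sq_sqrt (by positivity), Real.sq_sqrt hc0.le]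
    linear_combination (- stdPdf (σ * Real.sqrt (x - t)) * σ) * h1
      + stdPdf (σ * Real.sqrt (x - t)) * σ * h2
  have key : ∀ x ∈ Ioi t, HasDerivAt (fun y => f y - g y) 0 x := by
    intro x hx
    have h := (hdf x).sub (hdg x hx)
    rw [sub_self] at h
    exact h
  have hconst : ∀ x ∈ Ioi t, ∀ y ∈ Ioi t, f x - g x = f y - g y := by
    intro x hx y hy
    refine (convex_Ioi t).is_const_of_fderivWithin_eq_zero
      (fun z hz => (key z hz).differentiableAt.differentiableWithinAt) ?_ hx hy
    intro z hz
    rw [fderivWithin_of_isOpen isOpen_Ioi hz, (key z hz).hasFDerivAt.fderiv]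
    ext
    simp
  have hfc : Continuous f :=
    continuous_const.mul (intervalIntegral.continuous_primitive
      (fun a b => hcont.intervalIntegrable a b) t)
  have hgc : Continuous g := by rw [hg]; fun_prop
  have h0 : f t - g t = 0 := by
    simp [hf, hg, stdCdf_zero]
  have hT : f T - g T = 0 := by
    have h1 : Tendsto (fun y => f y - g y) (nhdsWithin t (Ioi t)) (nhds (f t - g t)) :=
      ((hfc.sub hgc).tendsto t).mono_left nhdsWithin_le_nhds
    have h2 : Tendsto (fun y => f y - g y) (nhdsWithin t (Ioi t)) (nhds (f T - g T)) := by
      refine Tendsto.congr' ?_ tendsto_const_nhds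
      filter_upwards [self_mem_nhdsWithin] with y hy
      exact hconst T htT y hy
    rw [h0] at h1
    exact (tendsto_nhds_unique h2 h1)
  have : f T = g T := sub_eq_zero.mp hT
  exact this
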